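/- Suppose Q = ∑_{i=1}^m ℓ_i b_i b_iᵀ with ℓ_i > 0 and b_i ∈ ℤ^g, and suppose for a given u ∈ ℤ^g there exists w ∈ ℤ^g with w ≡ u mod 2 and b_iᵀw ∈ {0, 1, -1} for all i. Then Θ_u(Q) = -(1/4)·∑_{i : b_iᵀu odd} ℓ_i. -/
import Mathlib

open Matrix

theorem quad_aux (g m : ℕ) (ℓ : Fin m → ℝ) (v : Fin m → (Fin g → ℝ)) (x : Fin g → ℝ) :
    x ⬝ᵥ (∑ i : Fin m, ℓ i • Matrix.vecMulVec (v i) (v i)).mulVec x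
      = ∑ i, ℓ i * (v i ⬝ᵥ x)^2 := by
  simp only [dotProduct, Matrix.mulVec, Matrix.sum_apply, Matrix.smul_apply,
    Matrix.vecMulVec_apply, smul_eq_mul, dotProduct,
    Finset.mul_sum, Finset.sum_mul]
  conv_lhs => rw [Finset.sum_congr rfl fun j _ => Finset.sum_comm]
  rw [Finset.sum_comm]
  refine Finset.sum_congr rfl fun i _ => ?_
  conv_rhs => rw [pow_two, Finset.sum_mul, Finset.mul_sum]
  refine Finset.sum_congr rfl fun j _ => ?_
  conv_rhs => rw [Finset.mul_sum, Finset.mul_sum]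
  exact Finset.sum_congr rfl fun k _ => by ring

/-- The tropical theta constant `Θ_u(Q) = max_{λ ∈ ℤ^g} -(λ+u/2)ᵀQ(λ+u/2)`. -/
noncomputable def tropThetaConst (g : ℕ) (Q : Matrix (Fin g) (Fin g) ℝ) (u : Fin g → ℤ) : ℝ :=
  sSup (Set.range fun lam : Fin g → ℤ =>
    -((fun j => (lam j : ℝ) + (u j : ℝ) / 2) ⬝ᵥ
        Q.mulVec (fun j => (lam j : ℝ) + (u j : ℝ) / 2)))

theorem stmt11 (g m : ℕ) (b : Fin m → (Fin g → ℤ)) (ℓ : Fin m → ℝ)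
    (hℓ : ∀ i, 0 < ℓ i)
    (Q : Matrix (Fin g) (Fin g) ℝ)
    (hQ : Q = ∑ i : Fin m, ℓ i •
      Matrix.vecMulVec (fun j => ((b i j : ℤ) : ℝ)) (fun j => ((b i j : ℤ) : ℝ)))
    (u w : Fin g → ℤ)
    (hwu : ∀ j, Even (w j - u j))
    (hw : ∀ i, b i ⬝ᵥ w = 0 ∨ b i ⬝ᵥ w = 1 ∨ b i ⬝ᵥ w = -1) :
    tropThetaConst g Q u =
      -(1 / 4) * ∑ i ∈ Finset.univ.filter (fun i => Odd (b i ⬝ᵥ u)), ℓ i := by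
  classical
  set c : ℝ := -(1 / 4) * ∑ i ∈ Finset.univ.filter (fun i => Odd (b i ⬝ᵥ u)), ℓ i with hc
  set f : (Fin g → ℤ) → ℝ := fun lam =>
    -((fun j => (lam j : ℝ) + (u j : ℝ) / 2) ⬝ᵥ
        Q.mulVec (fun j => (lam j : ℝ) + (u j : ℝ) / 2)) with hf
  have hval : ∀ lam : Fin g → ℤ,
      f lam = -∑ i, ℓ i * (((2 * (b i ⬝ᵥ lam) + b i ⬝ᵥ u : ℤ) : ℝ) / 2)^2 := by
    intro lam
    rw [hf]
    simp only [hQ, quad_aux]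
    congr 1
    refine Finset.sum_congr rfl fun i _ => ?_
    congr 1
    have hdot : (fun j => ((b i j : ℤ) : ℝ)) ⬝ᵥ (fun j => (lam j : ℝ) + (u j : ℝ) / 2)
        = ((b i ⬝ᵥ lam : ℤ) : ℝ) + ((b i ⬝ᵥ u : ℤ) : ℝ) / 2 := by
      simp only [dotProduct]
      push_cast
      rw [Finset.sum_div, ← Finset.sum_add_distrib]
      exact Finset.sum_congr rfl fun j _ => by ring
    rw [hdot]
    push_cast
    ring
  have hsq : ∀ n : ℤ, Odd n → (1/4 : ℝ) ≤ ((n : ℝ) / 2)^2 := by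
    intro n hn
    have hne : n ≠ 0 := by rintro rfl; exact (Int.not_odd_iff_even.mpr Even.zero) hn
    have h1 : (1 : ℤ) ≤ n^2 := by rcases hne.lt_or_gt with h | h <;> nlinarith
    have h2 : (1 : ℝ) ≤ (n : ℝ)^2 := by exact_mod_cast h1
    nlinarith
  have hub : ∀ lam : Fin g → ℤ, f lam ≤ c := by
    intro lam
    rw [hval lam, hc]
    have h1 : ∑ i ∈ Finset.univ.filter (fun i => Odd (b i ⬝ᵥ u)), ℓ i * (1/4 : ℝ)
        ≤ ∑ i, ℓ i * (((2 * (b i ⬝ᵥ lam) + b i ⬝ᵥ u : ℤ) : ℝ) / 2)^2 := by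
      refine le_trans (Finset.sum_le_sum fun i hi => ?_)
        (Finset.sum_le_sum_of_subset_of_nonneg (Finset.filter_subset _ _)
          (fun i _ _ => mul_nonneg (hℓ i).le (sq_nonneg _)))
      have ho : Odd (b i ⬝ᵥ u) := (Finset.mem_filter.mp hi).2
      have hodd : Odd (2 * (b i ⬝ᵥ lam) + b i ⬝ᵥ u) := by
        rcases ho with ⟨k, hk⟩; exact ⟨b i ⬝ᵥ lam + k, by omega⟩
      exact mul_le_mul_of_nonneg_left (hsq _ hodd) (hℓ i).le
    have h2 : ∑ i ∈ Finset.univ.filter (fun i => Odd (b i ⬝ᵥ u)), ℓ i * (1/4 : ℝ)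
        = (1/4 : ℝ) * ∑ i ∈ Finset.univ.filter (fun i => Odd (b i ⬝ᵥ u)), ℓ i := by
      rw [Finset.mul_sum]; exact Finset.sum_congr rfl fun i _ => by ring
    linarith [h1, h2.symm.le]
  set lam0 : Fin g → ℤ := fun j => (w j - u j) / 2 with hlam0
  have hlam0' : ∀ j, 2 * lam0 j = w j - u j := by
    intro j
    rcases hwu j with ⟨k, hk⟩
    simp only [hlam0]
    omega
  have hatt : f lam0 = c := by
    rw [hval lam0, hc]
    have hwr : ∀ i, 2 * (b i ⬝ᵥ lam0) + b i ⬝ᵥ u = b i ⬝ᵥ w := by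
      intro i
      simp only [dotProduct, Finset.mul_sum, ← Finset.sum_add_distrib]
      refine Finset.sum_congr rfl fun j _ => ?_
      linear_combination (b i j) * hlam0' j
    have hpar : ∀ i, (Odd (b i ⬝ᵥ w) ↔ Odd (b i ⬝ᵥ u)) := by
      intro i
      rw [← hwr i]
      constructor
      · rintro ⟨k, hk⟩; exact ⟨k - (b i ⬝ᵥ lam0), by omega⟩
      · rintro ⟨k, hk⟩; exact ⟨k + (b i ⬝ᵥ lam0), by omega⟩
    have hsum : ∑ i, ℓ i * (((2 * (b i ⬝ᵥ lam0) + b i ⬝ᵥ u : ℤ) : ℝ) / 2)^2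
        = ∑ i, (if Odd (b i ⬝ᵥ u) then ℓ i * (1/4 : ℝ) else 0) := by
      refine Finset.sum_congr rfl fun i _ => ?_
      rw [hwr i]
      by_cases ho : Odd (b i ⬝ᵥ u)
      · have hwodd : Odd (b i ⬝ᵥ w) := (hpar i).mpr ho
        rcases hw i with h0 | h1 | h1
        · rw [h0] at hwodd; exact absurd hwodd (by decide)
        · rw [h1]; simp only [ho, if_true]; norm_num
        · rw [h1]; simp only [ho, if_true]; push_cast; norm_num
      · have h0 : b i ⬝ᵥ w = 0 := by
          rcases hw i with h | h | h
          · exact h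
          · exact absurd ((hpar i).mp (h ▸ odd_one)) ho
          · exact absurd ((hpar i).mp (h ▸ (by decide : Odd (-1 : ℤ)))) ho
        rw [h0]; simp [ho]
    rw [hsum, ← Finset.sum_filter, ← Finset.sum_mul]
    ring
  have hbdd : BddAbove (Set.range f) := ⟨c, by rintro y ⟨lam, rfl⟩; exact hub lam⟩
  show sSup (Set.range f) = c
  exact le_antisymm
    (csSup_le (Set.range_nonempty f) (by rintro y ⟨lam, rfl⟩; exact hub lam))
    (le_csSup hbdd ⟨lam0, hatt⟩)
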